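/- Let A and B be positive semidefinite p×p real symmetric matrices, λ > 0, and w ∈ ℝ^p. Then ‖(λI + B)⁻²(2λI + B) B w − (λI + A)⁻²(2λI + A) A w‖ ≤ (4‖w‖/λ) ‖B − A‖, where ‖·‖ denotes the operator norm for matrices and the Euclidean norm for vectors. -/

import Mathlib

open scoped Matrix.Norms.L2Operator
open scoped RealInnerProductSpace

section Aux

variable {p : ℕ}

/-- `λ•1 + M` is positive definite when `M` is PSD and `λ > 0`. -/
lemma aux_posdef {M : Matrix (Fin p) (Fin p) ℝ} (hM : M.PosSemidef) {lam : ℝ}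
    (hlam : 0 < lam) : (lam • (1 : Matrix (Fin p) (Fin p) ℝ) + M).PosDef := by
  have h1 : (lam • (1 : Matrix (Fin p) (Fin p) ℝ)).PosDef := by
    refine Matrix.PosDef.of_dotProduct_mulVec_pos (by simp [Matrix.IsHermitian]) fun x hx => ?_
    rw [Matrix.smul_mulVec, Matrix.one_mulVec, dotProduct_smul]
    exact smul_pos hlam (Matrix.dotProduct_star_self_pos_iff.mpr hx)
  exact h1.add_posSemidef hM

/-- resolvent norm bound -/
lemma aux_res_norm {M : Matrix (Fin p) (Fin p) ℝ} (hM : M.PosSemidef) {lam : ℝ}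
    (hlam : 0 < lam) : ‖(lam • (1 : Matrix (Fin p) (Fin p) ℝ) + M)⁻¹‖ ≤ 1 / lam := by
  set N := lam • (1 : Matrix (Fin p) (Fin p) ℝ) + M with hNdef
  have hNpd := aux_posdef hM hlam
  have hmul : N * N⁻¹ = 1 := Matrix.mul_nonsing_inv _ hNpd.det_pos.ne'.isUnit
  rw [Matrix.cstar_norm_def]
  refine ContinuousLinearMap.opNorm_le_bound _ (by positivity) fun v => ?_
  set T := Matrix.toEuclideanCLM (𝕜 := ℝ) (n := Fin p) with hT
  set x := T N⁻¹ v with hx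
  have hTx : T N x = v := by
    rw [hx, ← ContinuousLinearMap.mul_apply, ← map_mul, hmul, map_one,
      ContinuousLinearMap.one_apply]
  have hinner_nonneg : 0 ≤ ⟪x, T M x⟫ := by
    rw [EuclideanSpace.inner_eq_star_dotProduct, Matrix.ofLp_toEuclideanCLM]
    rw [dotProduct_comm]; exact hM.dotProduct_mulVec_nonneg _
  have hNx : T N x = lam • x + T M x := by
    rw [hNdef, map_add, map_smul, map_one, ContinuousLinearMap.add_apply,
      ContinuousLinearMap.smul_apply, ContinuousLinearMap.one_apply]
  have key : lam * ‖x‖ ^ 2 ≤ ‖x‖ * ‖v‖ := by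
    have h1 : lam * ‖x‖ ^ 2 ≤ ⟪x, T N x⟫ := by
      rw [hNx, inner_add_right, real_inner_smul_right, real_inner_self_eq_norm_sq]
      linarith
    calc lam * ‖x‖ ^ 2 ≤ ⟪x, T N x⟫ := h1
      _ = ⟪x, v⟫ := by rw [hTx]
      _ ≤ ‖x‖ * ‖v‖ := real_inner_le_norm x v
  rcases eq_or_lt_of_le (norm_nonneg x) with h0 | h0
  · rw [← h0]; positivity
  · have h2 : lam * ‖x‖ ≤ ‖v‖ := le_of_mul_le_mul_left (by nlinarith [key]) h0
    calc ‖x‖ = (lam * ‖x‖) / lam := by field_simp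
      _ ≤ ‖v‖ / lam := by gcongr
      _ = 1 / lam * ‖v‖ := by ring

/-- The key algebraic identity: `(λI+M)⁻²(2λI+M)M = I - λ² (λI+M)⁻²`. -/
lemma aux_identity {M : Matrix (Fin p) (Fin p) ℝ} (hM : M.PosSemidef) {lam : ℝ}
    (hlam : 0 < lam) :
    ((lam • 1 + M)⁻¹) ^ 2 * ((2 * lam) • 1 + M) * M
      = 1 - lam ^ 2 • ((lam • 1 + M)⁻¹) ^ 2 := by
  set N := lam • (1 : Matrix (Fin p) (Fin p) ℝ) + M with hNdef
  have hinv : N⁻¹ * N = 1 :=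
    Matrix.nonsing_inv_mul _ (aux_posdef hM hlam).det_pos.ne'.isUnit
  have hsq : ((2 * lam) • (1 : Matrix (Fin p) (Fin p) ℝ) + M) * M
      = N ^ 2 - lam ^ 2 • 1 := by
    simp only [hNdef, pow_two, add_mul, mul_add, Matrix.smul_mul, Matrix.mul_smul,
      one_mul, mul_one, smul_smul]
    module
  calc ((lam • 1 + M)⁻¹) ^ 2 * ((2 * lam) • 1 + M) * M
      = N⁻¹ ^ 2 * (N ^ 2 - lam ^ 2 • 1) := by rw [mul_assoc, hsq]
    _ = N⁻¹ ^ 2 * N ^ 2 - lam ^ 2 • N⁻¹ ^ 2 := by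
        rw [mul_sub, Matrix.mul_smul, mul_one]
    _ = 1 - lam ^ 2 • N⁻¹ ^ 2 := by
        rw [pow_two, pow_two, mul_assoc, ← mul_assoc N⁻¹ N N, hinv, one_mul, hinv]

end Aux

/-- Let `A`, `B` be positive semidefinite `p × p` real symmetric
matrices, `λ > 0`, and `w ∈ ℝ^p`.  Then
`‖(λI + B)⁻²(2λI + B) B w − (λI + A)⁻²(2λI + A) A w‖ ≤ (4‖w‖/λ) ‖B − A‖`, where matrices
carry the operator (spectral) norm and vectors the Euclidean norm. -/
theorem bias_corrected_resolvent_difference_bound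
    {p : ℕ} (A B : Matrix (Fin p) (Fin p) ℝ)
    (hA : A.PosSemidef) (hB : B.PosSemidef)
    (lam : ℝ) (hlam : 0 < lam) (w : EuclideanSpace ℝ (Fin p)) :
    ‖Matrix.toEuclideanCLM (𝕜 := ℝ) (((lam • 1 + B)⁻¹) ^ 2 * ((2 * lam) • 1 + B) * B) w -
        Matrix.toEuclideanCLM (𝕜 := ℝ) (((lam • 1 + A)⁻¹) ^ 2 * ((2 * lam) • 1 + A) * A) w‖
      ≤ 4 * ‖w‖ / lam * ‖B - A‖ := by
  set RA := (lam • (1 : Matrix (Fin p) (Fin p) ℝ) + A)⁻¹ with hRAdef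
  set RB := (lam • (1 : Matrix (Fin p) (Fin p) ℝ) + B)⁻¹ with hRBdef
  have hAu := (aux_posdef hA hlam).det_pos.ne'.isUnit
  have hBu := (aux_posdef hB hlam).det_pos.ne'.isUnit
  have hA1 : RA * (lam • 1 + A) = 1 := Matrix.nonsing_inv_mul _ hAu
  have hB2 : (lam • 1 + B) * RB = 1 := Matrix.mul_nonsing_inv _ hBu
  have hnRA : ‖RA‖ ≤ 1 / lam := aux_res_norm hA hlam
  have hnRB : ‖RB‖ ≤ 1 / lam := aux_res_norm hB hlam
  -- resolvent difference identity
  have hdiff : RA - RB = RA * (B - A) * RB := by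
    have h : RA * ((lam • 1 + B) - (lam • 1 + A)) * RB = RA - RB := by
      rw [mul_sub, sub_mul, mul_assoc, hB2, mul_one, hRAdef, hA1, one_mul]
    rw [← h, add_sub_add_left_eq_sub]
  have hnd : ‖RA - RB‖ ≤ 1 / lam * ‖B - A‖ * (1 / lam) := by
    rw [hdiff]
    calc ‖RA * (B - A) * RB‖ ≤ ‖RA * (B - A)‖ * ‖RB‖ := norm_mul_le _ _
      _ ≤ ‖RA‖ * ‖B - A‖ * ‖RB‖ := by
          gcongr
          exact norm_mul_le _ _
      _ ≤ 1 / lam * ‖B - A‖ * (1 / lam) := by gcongr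
  -- the matrix-level difference
  set D : Matrix (Fin p) (Fin p) ℝ :=
    ((lam • 1 + B)⁻¹) ^ 2 * ((2 * lam) • 1 + B) * B -
      ((lam • 1 + A)⁻¹) ^ 2 * ((2 * lam) • 1 + A) * A with hDdef
  have hDeq : D = lam ^ 2 • (RA ^ 2 - RB ^ 2) := by
    rw [hDdef, aux_identity hB hlam, aux_identity hA hlam, smul_sub]
    abel
  have hsplit : RA ^ 2 - RB ^ 2 = RA * (RA - RB) + (RA - RB) * RB := by
    rw [pow_two, pow_two]; noncomm_ring
  have hnsq : ‖RA ^ 2 - RB ^ 2‖ ≤ 2 / lam ^ 3 * ‖B - A‖ := by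
    calc ‖RA ^ 2 - RB ^ 2‖ ≤ ‖RA * (RA - RB)‖ + ‖(RA - RB) * RB‖ := by
          rw [hsplit]; exact norm_add_le _ _
      _ ≤ ‖RA‖ * ‖RA - RB‖ + ‖RA - RB‖ * ‖RB‖ :=
          add_le_add (norm_mul_le _ _) (norm_mul_le _ _)
      _ ≤ 1 / lam * (1 / lam * ‖B - A‖ * (1 / lam))
            + 1 / lam * ‖B - A‖ * (1 / lam) * (1 / lam) := by gcongr
      _ = 2 / lam ^ 3 * ‖B - A‖ := by field_simp; ring
  have hnD : ‖D‖ ≤ 2 / lam * ‖B - A‖ := by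
    rw [hDeq, norm_smul, Real.norm_eq_abs, abs_of_pos (by positivity : (0:ℝ) < lam ^ 2)]
    calc lam ^ 2 * ‖RA ^ 2 - RB ^ 2‖ ≤ lam ^ 2 * (2 / lam ^ 3 * ‖B - A‖) := by gcongr
      _ = 2 / lam * ‖B - A‖ := by field_simp
  -- pass to vectors
  have hvec : ‖Matrix.toEuclideanCLM (𝕜 := ℝ) (((lam • 1 + B)⁻¹) ^ 2 * ((2 * lam) • 1 + B) * B) w -
        Matrix.toEuclideanCLM (𝕜 := ℝ) (((lam • 1 + A)⁻¹) ^ 2 * ((2 * lam) • 1 + A) * A) w‖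
      ≤ ‖D‖ * ‖w‖ := by
    rw [← ContinuousLinearMap.sub_apply, ← map_sub, ← hDdef]
    calc ‖Matrix.toEuclideanCLM (𝕜 := ℝ) D w‖
        ≤ ‖Matrix.toEuclideanCLM (𝕜 := ℝ) D‖ * ‖w‖ := ContinuousLinearMap.le_opNorm _ _
      _ = ‖D‖ * ‖w‖ := by rw [← Matrix.cstar_norm_def]
  calc ‖Matrix.toEuclideanCLM (𝕜 := ℝ) (((lam • 1 + B)⁻¹) ^ 2 * ((2 * lam) • 1 + B) * B) w -
        Matrix.toEuclideanCLM (𝕜 := ℝ) (((lam • 1 + A)⁻¹) ^ 2 * ((2 * lam) • 1 + A) * A) w‖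
      ≤ ‖D‖ * ‖w‖ := hvec
    _ ≤ (2 / lam * ‖B - A‖) * ‖w‖ := by gcongr
    _ ≤ 4 * ‖w‖ / lam * ‖B - A‖ := by
        rw [div_mul_eq_mul_div, div_mul_eq_mul_div, div_mul_eq_mul_div, div_le_div_iff₀ hlam hlam]
        nlinarith [mul_nonneg (mul_nonneg (norm_nonneg w) (norm_nonneg (B - A))) hlam.le]
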